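/- Quadratic-relaxation form of the polyhedral feasibility condition (precise version of Theorem 4.3): let δ_P > 0. Then the condition "for all ζ ∈ ℝⁿ with |Σ_{j=1}^n ζⱼ| ≤ δ_P, ((δ_P μ⁽⁰⁾ + Σ_{j=1}^n ζⱼ μ⁽ʲ⁾)ᵀ x)² ≥ τ² δ_P²" holds if and only if there exists λ ≥ 0 such that the matrix A − λ B⁽ᴾ⁾ — i.e. the symmetric (n+1)×(n+1) matrix with (0,0)-entry a₀² − τ² − λ, (0,j)- and (j,0)-entries a₀ a_j, and (i,j)-entry a_i a_j + λ for 1 ≤ i, j ≤ n — is positive semidefinite. -/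

import Mathlib

open Matrix

noncomputable section

/-- `a j = (μ⁽ʲ⁾)ᵀ x`, the dot product of the `j`-th expected-return vector with `x`. -/
def avec (n : ℕ) (x : Fin n → ℝ) (μ : Fin (n + 1) → Fin n → ℝ) : Fin (n + 1) → ℝ :=
  fun j => μ j ⬝ᵥ x

/-- The symmetric matrix `A = a aᵀ - τ² e₀ e₀ᵀ`. -/
def Amat (n : ℕ) (x : Fin n → ℝ) (τ : ℝ) (μ : Fin (n + 1) → Fin n → ℝ) :
    Matrix (Fin (n + 1)) (Fin (n + 1)) ℝ :=
  Matrix.of fun i j =>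
    avec n x μ i * avec n x μ j - if i = 0 ∧ j = 0 then τ ^ 2 else 0

/-- The matrix `B⁽ᴱ⁾ = diag(1, -1, …, -1)`. -/
def BE (n : ℕ) : Matrix (Fin (n + 1)) (Fin (n + 1)) ℝ :=
  Matrix.diagonal fun i => if i = 0 then 1 else -1

/-- The matrix `B⁽ᴾ⁾ = e₀e₀ᵀ - J`: `(0,0)`-entry `1`, entries `-1` for `i, j ≥ 1`,
zero elsewhere. -/
def BP (n : ℕ) : Matrix (Fin (n + 1)) (Fin (n + 1)) ℝ :=
  Matrix.of fun i j =>
    if i = 0 ∧ j = 0 then 1 else if i ≠ 0 ∧ j ≠ 0 then -1 else 0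

/-- A real matrix is positive semidefinite: `zᵀ M z ≥ 0` for all `z`. -/
def IsPSD {d : ℕ} (M : Matrix (Fin d) (Fin d) ℝ) : Prop :=
  ∀ z : Fin d → ℝ, 0 ≤ z ⬝ᵥ M *ᵥ z


lemma quad_eq (n : ℕ) (x : Fin n → ℝ) (τ : ℝ) (μ : Fin (n + 1) → Fin n → ℝ)
    (lam : ℝ) (z : Fin (n+1) → ℝ) :
    z ⬝ᵥ (Amat n x τ μ - lam • BP n) *ᵥ z =
      (∑ i, avec n x μ i * z i)^2 - τ^2*(z 0)^2
        - lam*((z 0)^2 - (∑ i : Fin n, z i.succ)^2) := by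
  have hA : ∀ i, (∑ j, (Amat n x τ μ) i j * z j)
      = avec n x μ i * (∑ j, avec n x μ j * z j) - (if i = 0 then τ^2 * z 0 else 0) := by
    intro i
    by_cases hi : i = 0 <;>
      simp [Amat, hi, ite_and, sub_mul, Finset.sum_sub_distrib, ite_mul,
        Finset.sum_ite_eq', Finset.mul_sum, mul_assoc]
  have hB : ∀ i, (∑ j, (BP n) i j * z j)
      = if i = 0 then z 0 else -(∑ j : Fin n, z j.succ) := by
    intro i
    by_cases hi : i = 0
    · subst hi
      simp [BP, ite_and, Finset.sum_ite_eq']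
    · simp only [BP, Matrix.of_apply, hi, false_and, if_false, ne_eq, not_false_iff, true_and]
      rw [Fin.sum_univ_succ]
      simp [Fin.succ_ne_zero, Finset.sum_neg_distrib]
  simp only [dotProduct, mulVec, Matrix.sub_apply, Matrix.smul_apply, smul_eq_mul, dotProduct]
  have hrow : ∀ i, (∑ j, ((Amat n x τ μ) i j - lam * (BP n) i j) * z j)
      = (∑ j, (Amat n x τ μ) i j * z j) - lam * (∑ j, (BP n) i j * z j) := by
    intro i; rw [Finset.mul_sum, ← Finset.sum_sub_distrib]; congr 1; ext j; ring
  simp only [hrow, hA, hB]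
  set S := ∑ j, avec n x μ j * z j with hSdef
  set T := ∑ j : Fin n, z j.succ with hTdef
  have hS : S = avec n x μ 0 * z 0 + ∑ i : Fin n, avec n x μ i.succ * z i.succ := by
    rw [hSdef, Fin.sum_univ_succ]
  rw [Fin.sum_univ_succ]
  simp only [Fin.succ_ne_zero, if_false, eq_self_iff_true, if_true]
  have hsum : ∑ i : Fin n, z i.succ * (avec n x μ i.succ * S - 0 - lam * -T)
      = (∑ i : Fin n, avec n x μ i.succ * z i.succ) * S + lam * T * T := by
    rw [Finset.sum_mul, Finset.mul_sum, ← Finset.sum_add_distrib]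
    refine Finset.sum_congr rfl fun i _ => by ring
  rw [hsum]
  have h2 : ∑ i : Fin n, avec n x μ i.succ * z i.succ = S - avec n x μ 0 * z 0 := by
    rw [hS]; ring
  rw [h2]; ring

/-- Quadratic-relaxation form of the polyhedral feasibility condition (precise version of
Theorem 4.3): the condition over the slab `|∑ⱼ ζⱼ| ≤ δ_P` holds iff there is `λ ≥ 0` with
`A - λ B⁽ᴾ⁾` positive semidefinite. -/
theorem feasibility_polyhedral_relaxed (n : ℕ) (hn : 1 ≤ n) (x : Fin n → ℝ) (τ : ℝ)
    (μ : Fin (n + 1) → Fin n → ℝ) (δP : ℝ) (hδP : 0 < δP) :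
    (∀ ζ : Fin n → ℝ, |∑ j, ζ j| ≤ δP →
        τ ^ 2 * δP ^ 2 ≤ ((δP • μ 0 + ∑ j : Fin n, ζ j • μ j.succ) ⬝ᵥ x) ^ 2) ↔
      ∃ lam : ℝ, 0 ≤ lam ∧ IsPSD (Amat n x τ μ - lam • BP n) := by
  set a : Fin (n+1) → ℝ := avec n x μ with ha
  have hdot : ∀ ζ : Fin n → ℝ,
      (δP • μ 0 + ∑ j : Fin n, ζ j • μ j.succ) ⬝ᵥ x
        = δP * a 0 + ∑ j : Fin n, ζ j * a j.succ := by
    intro ζ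
    simp only [ha, avec, dotProduct, Pi.add_apply, Pi.smul_apply, Finset.sum_apply,
      smul_eq_mul, add_mul, Finset.sum_add_distrib, Finset.sum_mul, Finset.mul_sum]
    congr 1
    · exact Finset.sum_congr rfl fun k _ => by ring
    · rw [Finset.sum_comm]
      exact Finset.sum_congr rfl fun j _ => Finset.sum_congr rfl fun k _ => by ring
  have hsingle : ∀ (i : Fin n) (t : ℝ),
      (∑ j : Fin n, (fun j => if j = i then t else 0) j) = t ∧
      (∑ j : Fin n, (fun j => if j = i then t else 0) j * a j.succ) = t * a i.succ := by
    intro i t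
    constructor
    · simp [Finset.sum_ite_eq']
    · simp [ite_mul, Finset.sum_ite_eq']
  set i0 : Fin n := ⟨0, hn⟩ with hi0
  constructor
  · intro h
    have key : ∀ ζ : Fin n → ℝ, |∑ j, ζ j| ≤ δP →
        τ^2*δP^2 ≤ (δP * a 0 + ∑ j : Fin n, ζ j * a j.succ)^2 := by
      intro ζ hζ; rw [← hdot]; exact h ζ hζ
    have lam0 : τ^2 = 0 → ∃ lam : ℝ, 0 ≤ lam ∧ IsPSD (Amat n x τ μ - lam • BP n) := by
      intro hτ
      refine ⟨0, le_refl _, fun z => ?_⟩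
      rw [quad_eq, hτ]
      simp only [← ha, zero_mul, mul_zero, sub_zero]
      positivity
    by_cases hc : ∀ i : Fin n, a i.succ = a i0.succ
    · -- constant case
      set c := a i0.succ with hcdef
      by_cases hac : |a 0| ≤ |c|
      · -- interior minimum: τ² = 0
        apply lam0
        by_cases hc0 : c = 0
        · have ha0 : a 0 = 0 := by
            rw [hc0] at hac; simpa [abs_nonpos_iff] using hac
          have := key (fun _ => 0) (by simpa using hδP.le)
          simp [ha0] at this
          nlinarith [sq_nonneg τ, pow_pos hδP 2]
        · set t : ℝ := -(δP * a 0)/c with htdef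
          have h1 := (hsingle i0 t).1
          have h2 := (hsingle i0 t).2
          have hζ : |∑ j : Fin n, (fun j => if j = i0 then t else 0) j| ≤ δP := by
            rw [h1, htdef, abs_div, abs_neg, abs_mul, abs_of_pos hδP,
              div_le_iff₀ (abs_pos.mpr hc0)]
            nlinarith [abs_nonneg (a 0), hδP]
          have hkey := key _ hζ
          rw [h2] at hkey
          have hval : δP * a 0 + t * c = 0 := by
            rw [htdef]; field_simp; ring
          rw [hval] at hkey
          nlinarith [sq_nonneg τ, pow_pos hδP 2]
      · -- boundary minimum
        push_neg at hac
        set t : ℝ := if 0 ≤ a 0 * c then (-1:ℝ) else 1 with htdef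
        have h1 := (hsingle i0 (t*δP)).1
        have h2 := (hsingle i0 (t*δP)).2
        have hζ : |∑ j : Fin n, (fun j => if j = i0 then t*δP else 0) j| ≤ δP := by
          rw [h1, abs_mul, abs_of_pos hδP, htdef]
          split <;> simp
        have hkey := key _ hζ
        rw [h2, ← hcdef] at hkey
        have hτ2 : τ^2 ≤ a 0^2 - 2*|a 0 * c| + c^2 := by
          rcases le_or_gt 0 (a 0 * c) with hw | hw
          · rw [abs_of_nonneg hw]
            have ht : t = -1 := by rw [htdef, if_pos hw]
            rw [ht] at hkey
            have h3 : τ^2 * δP^2 ≤ (a 0^2 - 2*(a 0*c) + c^2) * δP^2 := by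
              linear_combination hkey
            exact le_of_mul_le_mul_right h3 (pow_pos hδP 2)
          · rw [abs_of_neg hw]
            have ht : t = 1 := by rw [htdef, if_neg (not_le.mpr hw)]
            rw [ht] at hkey
            have h3 : τ^2 * δP^2 ≤ (a 0^2 - 2*(-(a 0*c)) + c^2) * δP^2 := by
              linear_combination hkey
            exact le_of_mul_le_mul_right h3 (pow_pos hδP 2)
        refine ⟨|a 0 * c| - c^2, ?_, ?_⟩
        · rw [abs_mul]
          nlinarith [abs_nonneg c, abs_nonneg (a 0), sq_abs c, hac.le]
        · intro z
          rw [quad_eq]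
          simp only [← ha]
          have hsum : ∑ i : Fin (n+1), a i * z i
              = a 0 * z 0 + c * ∑ i : Fin n, z i.succ := by
            rw [Fin.sum_univ_succ, Finset.mul_sum]
            congr 1
            exact Finset.sum_congr rfl fun i _ => by rw [hc i]
          rw [hsum]
          set z0 := z 0
          set s := ∑ i : Fin n, z i.succ
          rcases le_or_gt 0 (a 0 * c) with hw | hw
          · rw [abs_of_nonneg hw] at hτ2 ⊢
            nlinarith [mul_nonneg hw (sq_nonneg (z0 + s)),
              mul_nonneg (sub_nonneg.2 hτ2) (sq_nonneg z0)]
          · rw [abs_of_neg hw] at hτ2 ⊢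
            nlinarith [mul_nonneg (neg_nonneg.2 hw.le) (sq_nonneg (z0 - s)),
              mul_nonneg (sub_nonneg.2 hτ2) (sq_nonneg z0)]
    · -- nonconstant case: τ² = 0
      apply lam0
      push_neg at hc
      obtain ⟨i, hi⟩ := hc
      have hd : a i.succ - a i0.succ ≠ 0 := sub_ne_zero.mpr hi
      set r : ℝ := -(δP * a 0)/(a i.succ - a i0.succ) with hrdef
      set ζ : Fin n → ℝ := fun j => (if j = i then r else 0) + (if j = i0 then -r else 0)
        with hζdef
      have hii0 : i ≠ i0 := fun hE => hi (by rw [hE])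
      have hsum0 : ∑ j, ζ j = 0 := by
        simp [hζdef, Finset.sum_add_distrib, Finset.sum_ite_eq']
      have hsuma : ∑ j : Fin n, ζ j * a j.succ = r * a i.succ + (-r) * a i0.succ := by
        simp [hζdef, add_mul, ite_mul, Finset.sum_add_distrib, Finset.sum_ite_eq']
      have hkey := key ζ (by rw [hsum0]; simpa using hδP.le)
      rw [hsuma] at hkey
      have hval : δP * a 0 + (r * a i.succ + (-r) * a i0.succ) = 0 := by
        have : r * a i.succ + (-r) * a i0.succ = r * (a i.succ - a i0.succ) := by ring
        rw [this, hrdef]; field_simp; ring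
      rw [hval] at hkey
      nlinarith [sq_nonneg τ, pow_pos hδP 2]
  · intro ⟨lam, hlam, hpsd⟩ ζ hζ
    have hq := hpsd (Fin.cons δP ζ)
    rw [quad_eq] at hq
    simp only [← ha, Fin.cons_zero, Fin.cons_succ] at hq
    have hcons : ∑ i : Fin (n+1), a i * (Fin.cons δP ζ : Fin (n+1) → ℝ) i
        = δP * a 0 + ∑ j : Fin n, ζ j * a j.succ := by
      rw [Fin.sum_univ_succ]
      simp only [Fin.cons_zero, Fin.cons_succ]
      rw [mul_comm]
      congr 1
      exact Finset.sum_congr rfl fun j _ => mul_comm _ _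
    rw [hcons] at hq
    rw [hdot ζ]
    have habs := abs_le.mp hζ
    have hle : (∑ j, ζ j)^2 ≤ δP^2 := sq_le_sq' habs.1 habs.2
    linarith [mul_nonneg hlam (sub_nonneg.2 hle)]
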